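/- Let ρ : {1,2,3,…} → ℝ and let F(z) = ∑_{n≥1} ( ∑_{T plane tree, |T|=n} ∏_{v∈T} ρ(h_v) ) z^n be the formal power series over ℝ whose n-th coefficient is the total hook weight of all plane trees of size n. Since F has zero constant term, 1 − F is invertible in the ring of formal power series, and for every n ≥ 1, [z^n]F(z) = ρ(n)·[z^{n-1}](1 − F(z))^{-1}. -/

import Mathlib

/-- A plane tree (ordered rooted tree): a root together with a finite
sequence of plane trees (its root subtrees). -/
inductive PlaneTree : Type where
  | node : List PlaneTree → PlaneTree

namespace PlaneTree

/-- The size of a plane tree: its number of vertices. -/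
def size : PlaneTree → ℕ
  | node ts => 1 + (ts.attach.map fun t => size t.1).sum
decreasing_by simp only [PlaneTree.node.sizeOf_spec]; have := List.sizeOf_lt_of_mem t.2; omega

/-- The degree weight `w_deg(T) = ∏_{v ∈ T} φ_{d(v)}`, where `d(v)` is the
out-degree of the vertex `v`. -/
noncomputable def degWeight (φ : ℕ → ℝ) : PlaneTree → ℝ
  | node ts => φ ts.length * (ts.attach.map fun t => degWeight φ t.1).prod
decreasing_by simp only [PlaneTree.node.sizeOf_spec]; have := List.sizeOf_lt_of_mem t.2; omega

/-- The hook weight `w_h(T) = ∏_{v ∈ T} ρ(h_v)`, where the hook length `h_v`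
is the number of vertices of the subtree of `T` rooted at `v`. -/
noncomputable def hookWeight (ρ : ℕ → ℝ) : PlaneTree → ℝ
  | node ts => ρ (size (node ts)) * (ts.attach.map fun t => hookWeight ρ t.1).prod
decreasing_by simp only [PlaneTree.node.sizeOf_spec]; have := List.sizeOf_lt_of_mem t.2; omega

end PlaneTree

noncomputable instance : DecidableEq PlaneTree := Classical.decEq _

def listSize (l : List PlaneTree) : ℕ := (l.map PlaneTree.size).sum

theorem size_node (ts : List PlaneTree) : (PlaneTree.node ts).size = 1 + listSize ts := by
  rw [PlaneTree.size, listSize]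
  congr 1
  rw [← List.attach_map_val (l := ts) (f := PlaneTree.size)]

mutual
noncomputable def treesOf : ℕ → Finset PlaneTree
  | 0 => ∅
  | n+1 => (listsOf n).image PlaneTree.node
termination_by n => 2*n
decreasing_by simp_wf; omega
noncomputable def listsOf : ℕ → Finset (List PlaneTree)
  | 0 => {[]}
  | m+1 => (Finset.range (m+1)).attach.biUnion fun k =>
      ((treesOf (k.1+1)) ×ˢ (listsOf (m - k.1))).image fun p => p.1 :: p.2
termination_by m => 2*m+1
decreasing_by
  · have := Finset.mem_range.mp k.2; simp_wf; omega
  · have := Finset.mem_range.mp k.2; simp_wf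
end

theorem size_pos (T : PlaneTree) : 1 ≤ T.size := by
  cases T with | node ts => rw [size_node]; omega

theorem listSize_cons (t : PlaneTree) (l : List PlaneTree) :
    listSize (t :: l) = t.size + listSize l := by simp [listSize]

theorem spec (n : ℕ) :
    (∀ T : PlaneTree, T ∈ treesOf n ↔ T.size = n) ∧
    (∀ l : List PlaneTree, l ∈ listsOf n ↔ listSize l = n) := by
  induction n using Nat.strong_induction_on with
  | _ n IH =>
    match n with
    | 0 =>
      constructor
      · intro T
        simp only [treesOf, Finset.notMem_empty, false_iff]
        have := size_pos T; omega
      · intro l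
        simp only [listsOf, Finset.mem_singleton]
        constructor
        · rintro rfl; rfl
        · intro h
          cases l with
          | nil => rfl
          | cons t l' =>
            rw [listSize_cons] at h
            have := size_pos t; omega
    | m+1 =>
      have htree : ∀ T : PlaneTree, T ∈ treesOf (m+1) ↔ T.size = m+1 := by
        intro T
        cases T with
        | node ts =>
          simp only [treesOf, Finset.mem_image]
          rw [size_node]
          constructor
          · rintro ⟨l', hl, hEq⟩
            injection hEq with h'
            subst h'
            rw [(IH m (by omega)).2 l'] at hl
            omega
          · intro h
            exact ⟨ts, ((IH m (by omega)).2 ts).mpr (by omega), rfl⟩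
      refine ⟨htree, ?_⟩
      have htree' : ∀ j ≤ m+1, ∀ T : PlaneTree, T ∈ treesOf j ↔ T.size = j := by
        intro j hj
        rcases eq_or_lt_of_le hj with rfl | hlt
        · exact htree
        · exact (IH j hlt).1
      intro l
      simp only [listsOf, Finset.mem_biUnion, Finset.mem_attach, true_and,
        Finset.mem_image, Finset.mem_product, Subtype.exists, Finset.mem_range]
      constructor
      · rintro ⟨k, hk, ⟨t, l'⟩, ⟨ht, hl'⟩, rfl⟩
        rw [htree' (k+1) (by omega)] at ht
        rw [(IH (m - k) (by omega)).2] at hl'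
        have ht' : t.size = k + 1 := ht
        have hl'' : listSize l' = m - k := hl'
        rw [listSize_cons]
        omega
      · intro h
        cases l with
        | nil => simp [listSize] at h
        | cons t l' =>
          rw [listSize_cons] at h
          have h1 := size_pos t
          refine ⟨t.size - 1, by omega, ⟨t, l'⟩, ⟨?_, ?_⟩, rfl⟩
          · show t ∈ treesOf _
            rw [htree' (t.size - 1 + 1) (by omega) t]; omega
          · show l' ∈ listsOf _
            rw [(IH (m - (t.size - 1)) (by omega)).2 l']; omega

theorem hookWeight_node (ρ : ℕ → ℝ) (ts : List PlaneTree) :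
    (PlaneTree.node ts).hookWeight ρ =
      ρ (PlaneTree.node ts).size * (ts.map (PlaneTree.hookWeight ρ)).prod := by
  rw [PlaneTree.hookWeight]
  congr 2
  rw [← List.attach_map_val (l := ts) (f := PlaneTree.hookWeight ρ)]

noncomputable def a (ρ : ℕ → ℝ) (n : ℕ) : ℝ := ∑ T ∈ treesOf n, T.hookWeight ρ
noncomputable def b (ρ : ℕ → ℝ) (m : ℕ) : ℝ :=
  ∑ l ∈ listsOf m, (l.map (PlaneTree.hookWeight ρ)).prod

theorem a_zero (ρ : ℕ → ℝ) : a ρ 0 = 0 := by simp [a, treesOf]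
theorem b_zero (ρ : ℕ → ℝ) : b ρ 0 = 1 := by simp [b, listsOf]

theorem a_succ (ρ : ℕ → ℝ) (n : ℕ) : a ρ (n+1) = ρ (n+1) * b ρ n := by
  rw [a, b, treesOf, Finset.sum_image (fun x _ y _ h => by injection h),
    Finset.mul_sum]
  refine Finset.sum_congr rfl fun l hl => ?_
  rw [hookWeight_node, size_node, ((spec n).2 l).mp hl, Nat.add_comm]

theorem b_succ (ρ : ℕ → ℝ) (m : ℕ) :
    b ρ (m+1) = ∑ k ∈ Finset.range (m+1), a ρ (k+1) * b ρ (m-k) := by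
  rw [b, listsOf]
  rw [Finset.sum_biUnion]
  · rw [← Finset.sum_attach (Finset.range (m+1)) (fun k => a ρ (k+1) * b ρ (m-k))]
    refine Finset.sum_congr rfl fun k _ => ?_
    rw [Finset.sum_image (fun p hp q hq h => ?_)]
    · rw [a, b, Finset.sum_mul_sum, Finset.sum_product]
      refine Finset.sum_congr rfl fun t _ => ?_
      refine Finset.sum_congr rfl fun l _ => ?_
      simp
    · injection h with h1 h2
      exact Prod.ext h1 h2
  · -- pairwise disjoint
    intro k _ k' _ hkk'
    simp only [Finset.disjoint_left, Finset.mem_image, Finset.mem_product]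
    rintro l ⟨⟨t, l1⟩, ⟨ht, _⟩, rfl⟩ ⟨⟨t', l1'⟩, ⟨ht', _⟩, h⟩
    injection h with h1 h2
    have e1 : t.size = k.1 + 1 := ((spec _).1 t).mp ht
    have e2 : t'.size = k'.1 + 1 := ((spec _).1 t').mp ht'
    have h1' : t' = t := h1
    rw [h1'] at e2
    exact hkk' (Subtype.ext (by omega))

theorem tsum_eq_a (ρ : ℕ → ℝ) (n : ℕ) :
    (∑' T : {T : PlaneTree // T.size = n}, T.1.hookWeight ρ) = a ρ n := by
  rw [a, ← Finset.tsum_subtype (treesOf n) (fun T => T.hookWeight ρ)]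
  exact (Equiv.tsum_eq (Equiv.subtypeEquivRight fun T => (spec n).1 T)
    (fun T : {T : PlaneTree // T.size = n} => T.1.hookWeight ρ)).symm

theorem b_mul_eq_one (ρ : ℕ → ℝ) :
    PowerSeries.mk (b ρ) * (1 - PowerSeries.mk (a ρ)) = 1 := by
  ext m
  rw [mul_sub, mul_one, map_sub, PowerSeries.coeff_mul,
    Finset.Nat.sum_antidiagonal_eq_sum_range_succ_mk]
  simp only [PowerSeries.coeff_mk]
  cases m with
  | zero => simp [b_zero, a_zero]
  | succ m =>
    rw [Finset.sum_range_succ, Nat.sub_self, a_zero, mul_zero, add_zero]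
    have key : ∑ k ∈ Finset.range (m+1), b ρ k * a ρ (m+1-k)
        = ∑ k ∈ Finset.range (m+1), a ρ (k+1) * b ρ (m-k) := by
      rw [← Finset.sum_range_reflect]
      refine Finset.sum_congr rfl fun j hj => ?_
      rw [Finset.mem_range] at hj
      rw [show m+1-(m+1-1-j) = j+1 from by omega,
        show m+1-1-j = m-j from by omega, mul_comm]
    rw [key, ← b_succ ρ m, sub_self, PowerSeries.coeff_one, if_neg (by omega)]

theorem inv_eq_b (ρ : ℕ → ℝ) :
    (1 - PowerSeries.mk (a ρ))⁻¹ = PowerSeries.mk (b ρ) := by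
  symm
  rw [PowerSeries.eq_inv_iff_mul_eq_one]
  · exact b_mul_eq_one ρ
  · simp [a_zero]


/-- **Hook length formula for plane trees** (the case `φ(t) = 1/(1−t)`).
If `F(z) = ∑_{n≥1} (∑_{|T|=n} ∏_{v∈T} ρ(h_v)) zⁿ`, then for all `n ≥ 1`,
`[zⁿ]F(z) = ρ(n) · [z^{n-1}] (1 − F(z))⁻¹` (where `1 − F` has constant term `1`,
hence is invertible as a formal power series). -/
theorem hook_length_plane_trees
    (ρ : ℕ → ℝ) (F : PowerSeries ℝ)
    (hF : F = PowerSeries.mk fun n =>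
      ∑' T : {T : PlaneTree // T.size = n}, T.1.hookWeight ρ)
    (n : ℕ) (hn : 1 ≤ n) :
    (PowerSeries.coeff n) F = ρ n * (PowerSeries.coeff (n - 1)) (1 - F)⁻¹ := by
  have hFA : F = PowerSeries.mk (a ρ) := by
    rw [hF]
    ext m
    simp only [PowerSeries.coeff_mk]
    exact tsum_eq_a ρ m
  obtain ⟨m, rfl⟩ : ∃ m, n = m + 1 := ⟨n - 1, by omega⟩
  rw [hFA, inv_eq_b ρ]
  simp only [PowerSeries.coeff_mk, Nat.add_sub_cancel]
  exact a_succ ρ m
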